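/- arXiv:1901.05494 — 3 statements merged into one kernel-verified Lean document; each statement's English description precedes it below -/
import Mathlib

section
/- Let n, U, J be natural numbers, let x* ∈ ℝⁿ, let f_u, g_u : ℝⁿ → ℝ (u ∈ Fin U) and h_j : ℝⁿ → ℝ (j ∈ Fin J) be differentiable at x*, let ω_u > 0 for all u, and suppose g_u(x*) > 0 for all u. Suppose (x*, α*) together with multipliers β* ∈ ℝ^U and μ* ∈ ℝ^J satisfies the KKT conditions of the fractional-constraint problem: maximize Σ_u ω_u α_u over (x, α) subject to α_u·g_u(x) − f_u(x) ≤ 0 for all u and h_j(x) ≤ 0 for all j; that is: (feasibility) α*_u·g_u(x*) ≤ f_u(x*) and h_j(x*) ≤ 0; (nonnegativity) β*_u ≥ 0 and μ*_j ≥ 0; (stationarity in α) ω_u − β*_u·g_u(x*) = 0 for all u; (stationarity in x) Σ_u β*_u·(∇f_u(x*) − α*_u·∇g_u(x*)) = Σ_j μ*_j·∇h_j(x*); (complementary slackness) β*_u·(α*_u·g_u(x*) − f_u(x*)) = 0 for all u and μ*_j·h_j(x*) = 0 for all j. Then β*_u = ω_u / g_u(x*) and α*_u = f_u(x*) / g_u(x*)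 for every u, and x* together with the multipliers μ* satisfies the KKT conditions of the parametric subtractive problem: maximize Σ_u β*_u·(f_u(x) − α*_u·g_u(x)) over x subject to h_j(x) ≤ 0 for all j; that is: h_j(x*) ≤ 0, μ*_j ≥ 0, μ*_j·h_j(x*) = 0 for all j, and Σ_u β*_u·(∇f_u(x*) − α*_u·∇g_u(x*)) = Σ_j μ*_j·∇h_j(x*). -/
/-- Forward direction of Theorem 1: a KKT point of the fractional-constraint
(epigraph) problem yields the parameter equations β* = ω/g(x*), α* = f(x*)/g(x*),
and satisfies the KKT conditions of the parametric subtractive problem. -/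
theorem stmt_0 (n U J : ℕ) (x : EuclideanSpace ℝ (Fin n))
    (f g : Fin U → EuclideanSpace ℝ (Fin n) → ℝ)
    (h : Fin J → EuclideanSpace ℝ (Fin n) → ℝ)
    (ω α β : Fin U → ℝ) (μ : Fin J → ℝ)
    (hf : ∀ u, DifferentiableAt ℝ (f u) x)
    (hg : ∀ u, DifferentiableAt ℝ (g u) x)
    (hh : ∀ j, DifferentiableAt ℝ (h j) x)
    (hω : ∀ u, 0 < ω u)
    (hgpos : ∀ u, 0 < g u x)
    -- KKT conditions of the fractional-constraint problem:
    (feas_frac : ∀ u, α u * g u x ≤ f u x)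
    (feas_ineq : ∀ j, h j x ≤ 0)
    (hβnn : ∀ u, 0 ≤ β u)
    (hμnn : ∀ j, 0 ≤ μ j)
    (stat_α : ∀ u, ω u - β u * g u x = 0)
    (stat_x : ∑ u, β u • (fderiv ℝ (f u) x - α u • fderiv ℝ (g u) x)
            = ∑ j, μ j • fderiv ℝ (h j) x)
    (cs_frac : ∀ u, β u * (α u * g u x - f u x) = 0)
    (cs_ineq : ∀ j, μ j * h j x = 0) :
    -- parameter equations:
    (∀ u, β u = ω u / g u x) ∧ (∀ u, α u = f u x / g u x) ∧
    -- KKT conditions of the parametric subtractive problem: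
    (∀ j, h j x ≤ 0) ∧ (∀ j, 0 ≤ μ j) ∧ (∀ j, μ j * h j x = 0) ∧
    (∑ u, β u • (fderiv ℝ (f u) x - α u • fderiv ℝ (g u) x)
      = ∑ j, μ j • fderiv ℝ (h j) x) := by
  have hβ : ∀ u, β u = ω u / g u x := by
    intro u
    have := stat_α u
    have hgne : g u x ≠ 0 := ne_of_gt (hgpos u)
    field_simp
    linarith
  refine ⟨hβ, ?_, feas_ineq, hμnn, cs_ineq, stat_x⟩
  intro u
  have hβpos : 0 < β u := by
    rw [hβ u]; exact div_pos (hω u) (hgpos u)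
  have h1 : α u * g u x - f u x = 0 := by
    have := cs_frac u
    exact (mul_eq_zero.mp this).resolve_left (ne_of_gt hβpos)
  have hgne : g u x ≠ 0 := ne_of_gt (hgpos u)
  field_simp
  linarith
end

section
/- Let n, U, J be natural numbers, let x* ∈ ℝⁿ, let f_u, g_u : ℝⁿ → ℝ (u ∈ Fin U) and h_j : ℝⁿ → ℝ (j ∈ Fin J) be differentiable at x*, let ω_u > 0 for all u, and suppose g_u(x*) > 0 for all u. Define the parameters α*_u = f_u(x*) / g_u(x*) and β*_u = ω_u / g_u(x*) for each u. Suppose x* together with multipliers μ* ∈ ℝ^J satisfies the KKT conditions of the parametric subtractive problem: maximize Σ_u β*_u·(f_u(x) − α*_u·g_u(x)) over x subject to h_j(x) ≤ 0 for all j; that is: h_j(x*) ≤ 0, μ*_j ≥ 0, μ*_j·h_j(x*) = 0 for all j, and Σ_u β*_u·(∇f_u(x*) − α*_u·∇g_u(x*)) = Σ_j μ*_j·∇h_j(x*). Then (x*, α*) together with the multipliers (β*, μ*) satisfies the KKT conditions of the fractional-constraint problem: maximize Σ_u ω_u α_u over (x, α) subject to α_u·g_u(x) − f_u(x) ≤ 0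 for all u and h_j(x) ≤ 0 for all j; that is: α*_u·g_u(x*) ≤ f_u(x*) and h_j(x*) ≤ 0; β*_u ≥ 0 and μ*_j ≥ 0; ω_u − β*_u·g_u(x*) = 0 for all u; Σ_u β*_u·(∇f_u(x*) − α*_u·∇g_u(x*)) = Σ_j μ*_j·∇h_j(x*); β*_u·(α*_u·g_u(x*) − f_u(x*)) = 0 for all u and μ*_j·h_j(x*) = 0 for all j. -/
/-- Converse direction of Theorem 1: if, for the parameters α* = f(x*)/g(x*) and
β* = ω/g(x*), the point x* with multipliers μ* is a KKT point of the parametric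
subtractive problem, then (x*, α*) with multipliers (β*, μ*) satisfies the KKT
conditions of the fractional-constraint (epigraph) problem. -/
theorem stmt_1 (n U J : ℕ) (x : EuclideanSpace ℝ (Fin n))
    (f g : Fin U → EuclideanSpace ℝ (Fin n) → ℝ)
    (h : Fin J → EuclideanSpace ℝ (Fin n) → ℝ)
    (ω α β : Fin U → ℝ) (μ : Fin J → ℝ)
    (hf : ∀ u, DifferentiableAt ℝ (f u) x)
    (hg : ∀ u, DifferentiableAt ℝ (g u) x)
    (hh : ∀ j, DifferentiableAt ℝ (h j) x)
    (hω : ∀ u, 0 < ω u)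
    (hgpos : ∀ u, 0 < g u x)
    -- definition of the parameters:
    (hα : ∀ u, α u = f u x / g u x)
    (hβ : ∀ u, β u = ω u / g u x)
    -- KKT conditions of the parametric subtractive problem:
    (feas_ineq : ∀ j, h j x ≤ 0)
    (hμnn : ∀ j, 0 ≤ μ j)
    (cs_ineq : ∀ j, μ j * h j x = 0)
    (stat_x : ∑ u, β u • (fderiv ℝ (f u) x - α u • fderiv ℝ (g u) x)
            = ∑ j, μ j • fderiv ℝ (h j) x) :
    -- KKT conditions of the fractional-constraint problem:
    (∀ u, α u * g u x ≤ f u x) ∧ (∀ j, h j x ≤ 0) ∧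
    (∀ u, 0 ≤ β u) ∧ (∀ j, 0 ≤ μ j) ∧
    (∀ u, ω u - β u * g u x = 0) ∧
    (∑ u, β u • (fderiv ℝ (f u) x - α u • fderiv ℝ (g u) x)
      = ∑ j, μ j • fderiv ℝ (h j) x) ∧
    (∀ u, β u * (α u * g u x - f u x) = 0) ∧ (∀ j, μ j * h j x = 0) := by
  refine ⟨?_, feas_ineq, ?_, hμnn, ?_, stat_x, ?_, cs_ineq⟩
  · intro u
    rw [hα u, div_mul_cancel₀ _ (hgpos u).ne']
  · intro u
    rw [hβ u]; exact div_nonneg (hω u).le (hgpos u).le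
  · intro u
    rw [hβ u, div_mul_cancel₀ _ (hgpos u).ne', sub_self]
  · intro u
    rw [hα u, div_mul_cancel₀ _ (hgpos u).ne', sub_self, mul_zero]
end

section
/- Let c > 0 be a real constant. The set {(f, p, N) ∈ ℝ × ℝ × ℝ : 0 ≤ f, 0 ≤ p, 0 < N, and f ≤ N · log(1 + c·p/N)} is a convex subset of ℝ³. -/
/-- Convexity of the per-link capacity constraint region: nonnegative flow f
not exceeding the Shannon capacity N·log(1 + c·p/N) with p ≥ 0, N > 0. -/
theorem stmt_5 (c : ℝ) (hc : 0 < c) :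
    Convex ℝ {t : ℝ × ℝ × ℝ | 0 ≤ t.1 ∧ 0 ≤ t.2.1 ∧ 0 < t.2.2 ∧
      t.1 ≤ t.2.2 * Real.log (1 + c * t.2.1 / t.2.2)} := by
  rintro ⟨f1, p1, N1⟩ ⟨hf1, hp1, hN1, hcap1⟩ ⟨f2, p2, N2⟩ ⟨hf2, hp2, hN2, hcap2⟩ a b ha hb hab
  simp only [Set.mem_setOf_eq, Prod.smul_mk, Prod.mk_add_mk, smul_eq_mul] at *
  have hN : 0 < a * N1 + b * N2 := by
    rcases ha.lt_or_eq with h | h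
    · nlinarith [mul_pos h hN1, mul_nonneg hb hN2.le]
    · have hb1 : b = 1 := by linarith
      nlinarith
  refine ⟨by nlinarith, by nlinarith, hN, ?_⟩
  set N := a * N1 + b * N2 with hNdef
  have hNne : N ≠ 0 := ne_of_gt hN
  have hx1 : (0:ℝ) < 1 + c * p1 / N1 := by positivity
  have hx2 : (0:ℝ) < 1 + c * p2 / N2 := by positivity
  have hlam : a * N1 / N + b * N2 / N = 1 := by field_simp; exact hNdef.symm
  have key := strictConcaveOn_log_Ioi.concaveOn.2 (Set.mem_Ioi.mpr hx1)
    (Set.mem_Ioi.mpr hx2) (by positivity : (0:ℝ) ≤ a * N1 / N)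
    (by positivity : (0:ℝ) ≤ b * N2 / N) hlam
  simp only [smul_eq_mul] at key
  have hcomb : a * N1 / N * (1 + c * p1 / N1) + b * N2 / N * (1 + c * p2 / N2)
      = 1 + c * (a * p1 + b * p2) / N := by
    field_simp
    ring
  rw [hcomb] at key
  have h1 : a * f1 ≤ a * (N1 * Real.log (1 + c * p1 / N1)) :=
    mul_le_mul_of_nonneg_left hcap1 ha
  have h2 : b * f2 ≤ b * (N2 * Real.log (1 + c * p2 / N2)) :=
    mul_le_mul_of_nonneg_left hcap2 hb
  have h3 := mul_le_mul_of_nonneg_left key hN.le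
  have e : N * (a * N1 / N * Real.log (1 + c * p1 / N1)
      + b * N2 / N * Real.log (1 + c * p2 / N2))
      = a * (N1 * Real.log (1 + c * p1 / N1)) + b * (N2 * Real.log (1 + c * p2 / N2)) := by
    field_simp
  rw [e] at h3
  linarith
end
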